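/- For an affine automorphism f(x) = u·x + v of Z/n and a composition σ ∈ Σ(n,k), the image of the realization f(σ(x)) equals the realization of the u-transform u·σ at the point f(x); consequently f maps the family of translates {σ(x) + i : i ∈ Z/n} to the family {(u·σ)(y) + i : i ∈ Z/n}. -/

import Mathlib

def partialSumsList (σ : List ℕ) : List ℕ := (σ.scanl (· + ·) 0).take σ.length

def uTransform (n : ℕ) (u : ZMod n) (σ : List ℕ) : List ℕ :=
  let L := ((partialSumsList σ).map fun s => (u * (s : ZMod n)).val).toFinset.sort (· ≤ ·)
  List.zipWith (fun a b => a - b) (L.tail ++ [n]) L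

/-- Realization of a composition (as a list) at a point of `ZMod n`. -/
def realizationL (n : ℕ) (σ : List ℕ) (x : ZMod n) : Set (ZMod n) :=
  (fun s : ℕ => x + (s : ZMod n)) '' {s | s ∈ partialSumsList σ}

lemma telesc : ∀ (L : List ℕ) (a m : ℕ), List.Chain' (· ≤ ·) (a :: (L ++ [m])) →
    List.scanl (· + ·) a (List.zipWith (fun x y => x - y) (L ++ [m]) (a :: L)) =
      a :: (L ++ [m]) := by
  intro L
  induction L with
  | nil =>
    intro a m h
    have ham : a ≤ m := (List.isChain_cons_cons.mp h).1
    simp [List.scanl, Nat.add_sub_cancel' ham]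
  | cons b L' ih =>
    intro a m h
    have hab : a ≤ b := (List.isChain_cons_cons.mp h).1
    have htail : List.Chain' (· ≤ ·) (b :: (L' ++ [m])) := (List.isChain_cons_cons.mp h).2
    have := ih b m htail
    simp only [List.cons_append, List.zipWith_cons_cons, List.scanl_cons,
      Nat.add_sub_cancel' hab]
    exact congrArg (a :: ·) this

section main
variable (n : ℕ) [NeZero n] (u : ZMod n) (σ : List ℕ)

lemma key_partialSums (hσ : σ ≠ []) :
    ∀ t : ℕ, t ∈ partialSumsList (uTransform n u σ) ↔
      ∃ s ∈ partialSumsList σ, (u * (s : ZMod n)).val = t := by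
  set P := partialSumsList σ with hPdef
  set L := ((P.map fun s => (u * (s : ZMod n)).val).toFinset).sort (· ≤ ·) with hLdef
  have hP0 : 0 ∈ P := by
    obtain ⟨c, rest, rfl⟩ := List.exists_cons_of_ne_nil hσ
    simp [hPdef, partialSumsList, List.scanl]
  have hmemL : ∀ t, t ∈ L ↔ ∃ s ∈ P, (u * (s : ZMod n)).val = t := by
    intro t
    simp [hLdef]
  have h0L : 0 ∈ L := by
    rw [hmemL]
    exact ⟨0, hP0, by simp⟩
  have hsort : L.Pairwise (· ≤ ·) := Finset.pairwise_sort _ _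
  have hub : ∀ t ∈ L, t ≤ n := by
    intro t ht
    obtain ⟨s, _, rfl⟩ := (hmemL t).mp ht
    exact le_of_lt (ZMod.val_lt _)
  obtain ⟨a, L', hLa⟩ := List.exists_cons_of_ne_nil (List.ne_nil_of_mem h0L)
  have ha0 : a = 0 := by
    rcases List.mem_cons.mp (hLa ▸ h0L) with h | h
    · exact h.symm
    · exact Nat.le_zero.mp (((List.pairwise_cons.mp (hLa ▸ hsort)).1) 0 h)
  have hchain : List.Chain' (· ≤ ·) (a :: (L' ++ [n])) := by
    unfold List.Chain'
    rw [List.isChain_iff_pairwise]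
    have hp : (a :: L').Pairwise (· ≤ ·) := hLa ▸ hsort
    rw [show a :: (L' ++ [n]) = (a :: L') ++ [n] by simp, List.pairwise_append]
    refine ⟨hp, by simp, ?_⟩
    intro x hx y hy
    simp only [List.mem_singleton] at hy
    subst hy
    exact hub x (hLa ▸ hx)
  have hτ : uTransform n u σ = List.zipWith (fun x y => x - y) (L' ++ [n]) (a :: L') := by
    simp only [uTransform, ← hPdef, ← hLdef, hLa, List.tail_cons]
  have hlenτ : (uTransform n u σ).length = L'.length + 1 := by
    rw [hτ]; simp
  subst ha0
  have hscan := telesc L' 0 n hchain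
  intro t
  rw [partialSumsList, hlenτ, hτ, hscan]
  have htake : List.take (L'.length + 1) ((0:ℕ) :: (L' ++ [n])) = 0 :: L' := by
    simp [List.take_succ_cons, List.take_left]
  rw [htake, ← hLa]
  exact hmemL t


theorem affine_image_of_orbit_cover (n k : ℕ) [NeZero n] (u : (ZMod n)ˣ) (v : ZMod n)
    (σ : List ℕ) (hlen : σ.length = k) (hpos : ∀ x ∈ σ, 0 < x) (hsum : σ.sum = n) :
    (∀ x : ZMod n,
      (fun y => (u : ZMod n) * y + v) '' realizationL n σ x =
        realizationL n (uTransform n (u : ZMod n) σ) ((u : ZMod n) * x + v)) ∧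
    (∀ x : ZMod n,
      (fun A : Set (ZMod n) => (fun y => (u : ZMod n) * y + v) '' A) ''
          (Set.range fun i : ZMod n => (fun a => a + i) '' realizationL n σ x) =
        Set.range fun i : ZMod n =>
          (fun a => a + i) ''
            realizationL n (uTransform n (u : ZMod n) σ) ((u : ZMod n) * x + v)) := by
  have hσne : σ ≠ [] := by
    rintro rfl
    exact (NeZero.ne n) (by simpa using hsum.symm)
  have hkey := key_partialSums n (u : ZMod n) σ hσne
  have h1 : ∀ x : ZMod n,
      (fun y => (u : ZMod n) * y + v) '' realizationL n σ x =
        realizationL n (uTransform n (u : ZMod n) σ) ((u : ZMod n) * x + v) := by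
    intro x
    ext y
    simp only [realizationL, Set.image_image, Set.mem_image, Set.mem_setOf_eq, hkey]
    constructor
    · rintro ⟨s, hs, rfl⟩
      refine ⟨((u : ZMod n) * s).val, ⟨s, hs, rfl⟩, ?_⟩
      simp only [ZMod.natCast_val, ZMod.cast_id]
      ring
    · rintro ⟨t, ⟨s, hs, rfl⟩, rfl⟩
      refine ⟨s, hs, ?_⟩
      simp only [ZMod.natCast_val, ZMod.cast_id]
      ring
  refine ⟨h1, ?_⟩
  have himg : ∀ (i : ZMod n) (A : Set (ZMod n)),
      (fun y => (u : ZMod n) * y + v) '' ((fun a => a + i) '' A) =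
        (fun a => a + (u : ZMod n) * i) '' ((fun y => (u : ZMod n) * y + v) '' A) := by
    intro i A
    rw [← Set.image_comp, ← Set.image_comp]
    apply Set.image_congr'
    intro a
    simp only [Function.comp_apply]
    ring
  intro x
  ext S
  simp only [Set.mem_image, Set.mem_range]
  constructor
  · rintro ⟨A, ⟨i, rfl⟩, rfl⟩
    exact ⟨(u : ZMod n) * i, by rw [himg, h1 x]⟩
  · rintro ⟨i, rfl⟩
    refine ⟨(fun a => a + ((u⁻¹ : (ZMod n)ˣ) : ZMod n) * i) '' realizationL n σ x,
      ⟨((u⁻¹ : (ZMod n)ˣ) : ZMod n) * i, rfl⟩, ?_⟩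
    rw [himg, h1 x, ← mul_assoc]
    norm_cast
    rw [mul_inv_cancel]
    simp
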